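/- Let Q₁ = ker(φ₁) ∩ ⋯ ∩ ker(φ_{j−1}) with irreducible basis matrix Ψ of determinant c∏_{l<j}(x−x_l), c ≠ 0, let ψ(v) = v·Ψ be the associated projection, and let Ψ_j be a basis matrix of ker(φ_j ∘ ψ) with det(Ψ_j) = c_j(x − x_j), c_j ≠ 0. Then Ψ_j·Ψ is a basis matrix of Q₁ ∩ ker(φ_j), and det(Ψ_j·Ψ) = c·c_j·∏_{l=1}^{j}(x − x_l). -/

import Mathlib

open Polynomial

/-- One step of the modular approach. Let `K i` be the solution module of the
evaluation homomorphism `φ_i(W,N) = d_i W(x_i) + g_i N(x_i)`, let `Ψ` be a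
basis matrix of `Q₁ = K 1 ∩ ⋯ ∩ K (j-1)` with `det Ψ = c·∏_{l<j}(x - x_l)`,
let `ψ(v) = v·Ψ` be the associated projection, and let `Ψ_j` be a basis matrix
of `ker(φ_j ∘ ψ)` with `det Ψ_j = c_j (x - x_j)`. Then `Ψ_j·Ψ` is a basis
matrix of `Q₁ ∩ K j` and `det (Ψ_j·Ψ) = c·c_j·∏_{l≤j}(x - x_l)`. -/
theorem stmt_19 {F : Type*} [Field F] (n : ℕ) (x : Fin (n + 1) → F)
    (hx : Function.Injective x) (d g : Fin (n + 1) → F)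
    (hdg : ∀ i, (d i, g i) ≠ (0, 0))
    (K : Fin (n + 1) → Submodule (Polynomial F) (Polynomial F × Polynomial F))
    (hK : ∀ i, ∀ p : Polynomial F × Polynomial F,
      p ∈ K i ↔ d i * p.1.eval (x i) + g i * p.2.eval (x i) = 0)
    (Q1 : Submodule (Polynomial F) (Polynomial F × Polynomial F))
    (hQ1 : Q1 = ⨅ i : Fin n, K i.castSucc)
    (Ψ Ψj : Matrix (Fin 2) (Fin 2) (Polynomial F))
    (b : Module.Basis (Fin 2) (Polynomial F) Q1)
    (hb : ∀ i, (b i : Polynomial F × Polynomial F) = (Ψ i 0, Ψ i 1))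
    (c : F) (hc : c ≠ 0)
    (hdet : Ψ.det = C c * ∏ l : Fin n, (X - C (x l.castSucc)))
    (S : Submodule (Polynomial F) (Polynomial F × Polynomial F))
    (hS : ∀ p : Polynomial F × Polynomial F, p ∈ S ↔
      (p.1 * Ψ 0 0 + p.2 * Ψ 1 0, p.1 * Ψ 0 1 + p.2 * Ψ 1 1) ∈ K (Fin.last n))
    (bj : Module.Basis (Fin 2) (Polynomial F) S)
    (hbj : ∀ i, (bj i : Polynomial F × Polynomial F) = (Ψj i 0, Ψj i 1))
    (cj : F) (hcj : cj ≠ 0)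
    (hdetj : Ψj.det = C cj * (X - C (x (Fin.last n)))) :
    (Ψj * Ψ).det = C (c * cj) * ∏ l : Fin (n + 1), (X - C (x l)) ∧
    ∃ b' : Module.Basis (Fin 2) (Polynomial F) ↥(Q1 ⊓ K (Fin.last n)),
      ∀ i, (b' i : Polynomial F × Polynomial F) =
        ((Ψj * Ψ) i 0, (Ψj * Ψ) i 1) := by
  constructor
  · rw [Matrix.det_mul, hdet, hdetj, Fin.prod_univ_castSucc, map_mul]
    ring
  · have hdetne : Ψ.det ≠ 0 := by
      rw [hdet]
      exact mul_ne_zero (by simpa using hc)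
        (Finset.prod_ne_zero_iff.mpr fun l _ => X_sub_C_ne_zero _)
    set ψ : (Polynomial F × Polynomial F) →ₗ[Polynomial F] (Polynomial F × Polynomial F) :=
      { toFun := fun p => (p.1 * Ψ 0 0 + p.2 * Ψ 1 0, p.1 * Ψ 0 1 + p.2 * Ψ 1 1)
        map_add' := by
          intro p q
          simp only [Prod.fst_add, Prod.snd_add, Prod.mk_add_mk, Prod.mk.injEq]
          constructor <;> ring
        map_smul' := by
          intro r p
          simp only [Prod.smul_fst, Prod.smul_snd, smul_eq_mul, RingHom.id_apply,
            Prod.smul_mk, Prod.mk.injEq]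
          constructor <;> ring } with hψdef
    have hψ_apply : ∀ p : Polynomial F × Polynomial F,
        ψ p = (p.1 * Ψ 0 0 + p.2 * Ψ 1 0, p.1 * Ψ 0 1 + p.2 * Ψ 1 1) := fun p => rfl
    have hψb : ∀ p : Polynomial F × Polynomial F,
        ψ p = p.1 • (b 0 : Polynomial F × Polynomial F)
            + p.2 • (b 1 : Polynomial F × Polynomial F) := by
      intro p
      rw [hψ_apply, hb 0, hb 1]
      simp [Prod.ext_iff, smul_eq_mul]
    have hψQ1 : ∀ p, ψ p ∈ Q1 := by
      intro p
      rw [hψb]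
      exact Q1.add_mem (Q1.smul_mem _ (b 0).2) (Q1.smul_mem _ (b 1).2)
    have hψinj : ∀ p, ψ p = 0 → p = 0 := by
      intro p hp
      have h1 : p.1 * Ψ 0 0 + p.2 * Ψ 1 0 = 0 := congrArg Prod.fst hp
      have h2 : p.1 * Ψ 0 1 + p.2 * Ψ 1 1 = 0 := congrArg Prod.snd hp
      have hd : Ψ.det = Ψ 0 0 * Ψ 1 1 - Ψ 0 1 * Ψ 1 0 := Matrix.det_fin_two Ψ
      have e1 : p.1 * Ψ.det = 0 := by
        rw [hd]; linear_combination Ψ 1 1 * h1 - Ψ 1 0 * h2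
      have e2 : p.2 * Ψ.det = 0 := by
        rw [hd]; linear_combination Ψ 0 0 * h2 - Ψ 0 1 * h1
      have hp1 : p.1 = 0 := by
        rcases mul_eq_zero.mp e1 with h | h
        · exact h
        · exact absurd h hdetne
      have hp2 : p.2 = 0 := by
        rcases mul_eq_zero.mp e2 with h | h
        · exact h
        · exact absurd h hdetne
      exact Prod.ext hp1 hp2
    -- any element of Q1 is ψ of its coordinates
    have hQ1surj : ∀ q : Q1, ψ (b.repr q 0, b.repr q 1) = (q : Polynomial F × Polynomial F) := by
      intro q
      rw [hψb]
      have := b.sum_repr q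
      have h2 : (b.repr q 0) • (b 0) + (b.repr q 1) • (b 1) = q := by
        rw [Fin.sum_univ_two] at this; exact this
      calc (b.repr q 0) • (b 0 : Polynomial F × Polynomial F)
            + (b.repr q 1) • (b 1 : Polynomial F × Polynomial F)
          = (((b.repr q 0) • (b 0) + (b.repr q 1) • (b 1) : Q1) : Polynomial F × Polynomial F) := by
            push_cast; rfl
        _ = q := by rw [h2]
    -- linear map from S to Q1 ⊓ K (last n)
    set T := Q1 ⊓ K (Fin.last n) with hT
    have hmem : ∀ s : S, ψ (s : Polynomial F × Polynomial F) ∈ T := by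
      intro s
      refine ⟨hψQ1 _, ?_⟩
      have := (hS (s : Polynomial F × Polynomial F)).mp s.2
      rwa [hψ_apply]
    set f : S →ₗ[Polynomial F] T :=
      { toFun := fun s => ⟨ψ (s : Polynomial F × Polynomial F), hmem s⟩
        map_add' := by intro s t; ext : 1; push_cast; exact map_add ψ _ _
        map_smul' := by intro r s; ext : 1; push_cast; exact map_smul ψ r _ } with hfdef
    have hfbij : Function.Bijective f := by
      constructor
      · intro s t hst
        have : ψ (s : Polynomial F × Polynomial F) = ψ (t : Polynomial F × Polynomial F) :=
          congrArg Subtype.val hst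
        have h0 : ψ ((s : Polynomial F × Polynomial F) - t) = 0 := by
          rw [map_sub, this, sub_self]
        have := hψinj _ h0
        exact Subtype.ext (sub_eq_zero.mp this)
      · rintro ⟨q, hq1, hqK⟩
        set v : Polynomial F × Polynomial F := (b.repr ⟨q, hq1⟩ 0, b.repr ⟨q, hq1⟩ 1) with hv
        have hψv : ψ v = q := hQ1surj ⟨q, hq1⟩
        have hvS : v ∈ S := by
          rw [hS]
          have : (v.1 * Ψ 0 0 + v.2 * Ψ 1 0, v.1 * Ψ 0 1 + v.2 * Ψ 1 1) = ψ v := (hψ_apply v).symm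
          rw [this, hψv]
          exact hqK
        exact ⟨⟨v, hvS⟩, Subtype.ext hψv⟩
    set e : S ≃ₗ[Polynomial F] T := LinearEquiv.ofBijective f hfbij with hedef
    refine ⟨bj.map e, ?_⟩
    intro i
    have h1 : ((bj.map e) i : Polynomial F × Polynomial F)
        = ψ (bj i : Polynomial F × Polynomial F) := by
      simp [Module.Basis.map_apply, hedef, LinearEquiv.ofBijective_apply, hfdef]
    rw [h1, hbj i, hψ_apply]
    have hM : ∀ k : Fin 2, (Ψj * Ψ) i k = Ψj i 0 * Ψ 0 k + Ψj i 1 * Ψ 1 k := by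
      intro k
      rw [Matrix.mul_apply, Fin.sum_univ_two]
    rw [hM 0, hM 1]
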